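/- Under hypotheses (H1)–(H3), the family of linear maps F_X : Z(X) → Z'(X) (characterized by F_X(v_Z(M)) = v_{Z'}(M) for all M : 𝟙 ⟶ X) is natural in X: for every morphism M : X ⟶ Y in C one has F_Y ∘ Z(M) = Z'(M) ∘ F_X as linear maps Z(X) → Z'(Y). -/

import Mathlib

open CategoryTheory MonoidalCategory

universe v u

/-- The distinguished vector `ε_Z(1) ∈ Z(𝟙)` determined by the unit isomorphism
`ε_Z : k ≅ Z(𝟙)` of a (strong) monoidal functor `Z : C ⥤ ModuleCat k`. -/
noncomputable def unitVec {k : Type*} [Field k] {C : Type u} [Category.{v} C]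
    [MonoidalCategory C] (Z : C ⥤ ModuleCat k) [Z.Monoidal] : Z.obj (𝟙_ C) :=
  Functor.LaxMonoidal.ε Z (1 : k)

/-- `v_Z(M) := Z(M)(ε_Z(1)) ∈ Z(X)` for a morphism `M : 𝟙 ⟶ X`. -/
noncomputable def vec {k : Type*} [Field k] {C : Type u} [Category.{v} C]
    [MonoidalCategory C] (Z : C ⥤ ModuleCat k) [Z.Monoidal] {X : C} (M : 𝟙_ C ⟶ X) :
    Z.obj X :=
  Z.map M (unitVec Z)

/-- Under (H1)–(H3), any family of linear maps `F_X : Z(X) → Z'(X)` with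
`F_X (v_Z(M)) = v_{Z'}(M)` for all `M : 𝟙 ⟶ X` is natural in `X`:
`F_Y ∘ Z(M) = Z'(M) ∘ F_X` for every morphism `M : X ⟶ Y`. -/
theorem components_natural {k : Type*} [Field k] {C : Type u} [Category.{v} C]
    [MonoidalCategory C] (Z Z' : C ⥤ ModuleCat k) [Z.Monoidal] [Z'.Monoidal]
    -- (H1): every object admits a morphism from and a morphism to the unit object
    (H1 : ∀ X : C, Nonempty (𝟙_ C ⟶ X) ∧ Nonempty (X ⟶ 𝟙_ C))
    -- (H2): for every `f : 𝟙 ⟶ 𝟙` the scalars `⟨Z(f)⟩` and `⟨Z'(f)⟩` agree and are nonzero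
    (H2 : ∀ f : 𝟙_ C ⟶ 𝟙_ C, ∃ c : k, c ≠ 0 ∧
      Z.map f (unitVec Z) = c • unitVec Z ∧ Z'.map f (unitVec Z') = c • unitVec Z')
    -- (H3): all state spaces are one-dimensional
    (H3 : ∀ X : C, Module.finrank k (Z.obj X) = 1 ∧ Module.finrank k (Z'.obj X) = 1)
    (F : ∀ X : C, Z.obj X →ₗ[k] Z'.obj X)
    (hF : ∀ (X : C) (M : 𝟙_ C ⟶ X), F X (vec Z M) = vec Z' M) :
    ∀ {X Y : C} (M : X ⟶ Y) (u : Z.obj X),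
      F Y (Z.map M u) = Z'.map M (F X u) := by
  intro X Y M u
  -- unitVec Z ≠ 0
  have hε : unitVec Z ≠ 0 := by
    intro h
    have hinj : Function.Injective (Functor.LaxMonoidal.ε Z) :=
      (ModuleCat.mono_iff_injective _).mp inferInstance
    have : (1 : k) = (0 : k) := hinj (by simpa [unitVec] using h)
    exact one_ne_zero this
  obtain ⟨⟨N⟩, ⟨P⟩⟩ := H1 X
  -- vec Z N ≠ 0
  obtain ⟨c, hc, hcZ, _⟩ := H2 (N ≫ P)
  have hvN : vec Z N ≠ 0 := by
    intro h
    have : Z.map (N ≫ P) (unitVec Z) = 0 := by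
      rw [Z.map_comp]
      simpa [vec] using congrArg (Z.map P) h
    rw [hcZ] at this
    exact hε (by simpa [smul_eq_zero, hc] using this)
  -- u is a multiple of vec Z N
  obtain ⟨a, ha⟩ := ((finrank_eq_one_iff_of_nonzero' (vec Z N) hvN).mp (H3 X).1) u
  have key : ∀ (W : C) (f : X ⟶ W), Z.map f (vec Z N) = vec Z (N ≫ f) := by
    intro W f
    simp [vec, Z.map_comp]
  subst ha
  rw [map_smul, map_smul, key Y M, hF, map_smul, hF, vec, Z'.map_comp,
    ConcreteCategory.comp_apply, map_smul]
  rfl
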